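/- Let n and m be finite index types, let W be a real m × n matrix and U a real m × m matrix such that the powers Uᵗ converge entrywise to the zero matrix as t → ∞. Let Π be the square block matrix Π = [[I, 0], [W, U]] (on the index type n ⊕ m, with I the n × n identity). Then I − U is invertible, the powers Πᵗ converge entrywise as t → ∞, and lim_{t→∞} Πᵗ = [[I, 0], [(I−U)⁻¹W, 0]]. -/

import Mathlib

open Filter Topology Matrix

/-- If `Π = [[I, 0], [W, U]]` is a block matrix with `Uᵗ → 0` entrywise, then `I − U`
is invertible, the powers `Πᵗ` converge entrywise, and
`lim Πᵗ = [[I, 0], [(I−U)⁻¹W, 0]]`. -/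
theorem absorbing_block_matrix_power_limit
    {n m : Type*} [Fintype n] [Fintype m] [DecidableEq n] [DecidableEq m]
    (W : Matrix m n ℝ) (U : Matrix m m ℝ)
    (hU : Tendsto (fun t : ℕ => U ^ t) atTop (𝓝 0)) :
    IsUnit ((1 : Matrix m m ℝ) - U) ∧
    Tendsto (fun t : ℕ => (Matrix.fromBlocks (1 : Matrix n n ℝ) (0 : Matrix n m ℝ) W U) ^ t)
      atTop
      (𝓝 (Matrix.fromBlocks (1 : Matrix n n ℝ) (0 : Matrix n m ℝ)
            (((1 : Matrix m m ℝ) - U)⁻¹ * W) (0 : Matrix m m ℝ))) := by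
  -- Step 1: `1 - U` is a unit.
  have hunit : IsUnit ((1 : Matrix m m ℝ) - U) := by
    rw [Matrix.isUnit_iff_isUnit_det, isUnit_iff_ne_zero]
    intro hdet
    obtain ⟨v, hv, hv0⟩ := (Matrix.exists_mulVec_eq_zero_iff).mpr hdet
    have hUv : U *ᵥ v = v := by
      have := hv0
      rw [Matrix.sub_mulVec, Matrix.one_mulVec, sub_eq_zero] at this
      exact this.symm
    have hpow : ∀ t : ℕ, (U ^ t) *ᵥ v = v := by
      intro t
      induction t with
      | zero => simp
      | succ t ih => rw [pow_succ, ← Matrix.mulVec_mulVec, hUv, ih]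
    have h1 : Tendsto (fun t : ℕ => (U ^ t) *ᵥ v) atTop (𝓝 ((0 : Matrix m m ℝ) *ᵥ v)) :=
      ((Continuous.matrix_mulVec continuous_id continuous_const).tendsto _).comp hU
    have h2 : Tendsto (fun _ : ℕ => v) atTop (𝓝 v) := tendsto_const_nhds
    have : v = (0 : Matrix m m ℝ) *ᵥ v := by
      refine tendsto_nhds_unique ?_ h1
      simpa only [hpow] using h2
    rw [Matrix.zero_mulVec] at this
    exact hv this
  refine ⟨hunit, ?_⟩
  have hinv : ((1 : Matrix m m ℝ) - U)⁻¹ * ((1 : Matrix m m ℝ) - U) = 1 :=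
    Matrix.nonsing_inv_mul _ (Matrix.isUnit_iff_isUnit_det _ |>.mp hunit)
  -- Step 2: the block power formula.
  have key : ∀ t : ℕ,
      (Matrix.fromBlocks (1 : Matrix n n ℝ) (0 : Matrix n m ℝ) W U) ^ t =
      Matrix.fromBlocks 1 0 ((∑ k ∈ Finset.range t, U ^ k) * W) (U ^ t) := by
    intro t
    induction t with
    | zero => simp [Matrix.fromBlocks_one]
    | succ t ih =>
        rw [pow_succ, ih, Matrix.fromBlocks_multiply, Finset.sum_range_succ, Matrix.add_mul]
        simp [Matrix.mul_assoc, pow_succ]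
  -- Step 3: partial geometric sums in terms of the inverse.
  have hgeom : ∀ t : ℕ,
      (∑ k ∈ Finset.range t, U ^ k) =
        ((1 : Matrix m m ℝ) - U)⁻¹ * (1 - U ^ t) := by
    intro t
    have hc : ((1 : Matrix m m ℝ) - U) * (∑ k ∈ Finset.range t, U ^ k) = 1 - U ^ t := by
      have := geom_sum_mul U t
      have hcomm : ((1 : Matrix m m ℝ) - U) * (∑ k ∈ Finset.range t, U ^ k)
          = (∑ k ∈ Finset.range t, U ^ k) * ((1 : Matrix m m ℝ) - U) := by
        rw [mul_sub, sub_mul, mul_one, one_mul]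
        congr 1
        rw [Finset.mul_sum, Finset.sum_mul]
        exact Finset.sum_congr rfl fun k _ => (pow_mul_comm' U k).symm
      rw [hcomm]
      calc (∑ k ∈ Finset.range t, U ^ k) * ((1 : Matrix m m ℝ) - U)
          = -((∑ k ∈ Finset.range t, U ^ k) * (U - 1)) := by rw [← mul_neg, neg_sub]
        _ = -(U ^ t - 1) := by rw [geom_sum_mul]
        _ = 1 - U ^ t := by rw [neg_sub]
    calc (∑ k ∈ Finset.range t, U ^ k)
        = ((1 : Matrix m m ℝ) - U)⁻¹ * (((1 : Matrix m m ℝ) - U) * (∑ k ∈ Finset.range t, U ^ k)) := by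
          rw [← Matrix.mul_assoc, hinv, Matrix.one_mul]
      _ = ((1 : Matrix m m ℝ) - U)⁻¹ * (1 - U ^ t) := by rw [hc]
  -- Step 4: pass to the limit.
  simp only [key, hgeom]
  have hsum : Tendsto (fun t : ℕ => ((1 : Matrix m m ℝ) - U)⁻¹ * (1 - U ^ t) * W) atTop
      (𝓝 (((1 : Matrix m m ℝ) - U)⁻¹ * W)) := by
    have h1 : Tendsto (fun t : ℕ => (1 : Matrix m m ℝ) - U ^ t) atTop (𝓝 1) := by
      have := hU.const_sub (1 : Matrix m m ℝ)
      simpa using this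
    have h2 : Continuous fun M : Matrix m m ℝ => ((1 : Matrix m m ℝ) - U)⁻¹ * M * W :=
      (Continuous.matrix_mul continuous_const continuous_id).matrix_mul continuous_const
    have := (h2.tendsto _).comp h1
    rw [Matrix.mul_one] at this; exact this
  have hc : Continuous fun p : Matrix m n ℝ × Matrix m m ℝ =>
      Matrix.fromBlocks (1 : Matrix n n ℝ) (0 : Matrix n m ℝ) p.1 p.2 :=
    Continuous.matrix_fromBlocks continuous_const continuous_const continuous_fst continuous_snd
  exact (hc.tendsto (((1 : Matrix m m ℝ) - U)⁻¹ * W, (0 : Matrix m m ℝ))).comp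
    (hsum.prodMk_nhds hU)
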